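/- Let $X$ be a nonnegative random variable with regularly varying survival function $\bar{F}_X\in\mathrm{RV}_{-\rho}$, $\rho>0$, and let $\epsilon_1,\epsilon_2$ be independent standard normal random variables, independent of $X$. For each $n\geq 1$ set $X_{1,n}=X/n+\epsilon_1$ and $X_{2,n}=X/n+\epsilon_2$. Then $(X_{1,n},X_{2,n})\to(\epsilon_1,\epsilon_2)$ almost surely as $n\to\infty$, yet for every fixed $n$ the tail dependence coefficient of $(X_{1,n},X_{2,n})$ equals $1$, while the tail dependence coefficient of $(\epsilon_1,\epsilon_2)$ equals $0$. Hence almost sure convergence does not imply convergence of tail dependence coefficients. -/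

import Mathlib

open Filter Topology MeasureTheory ProbabilityTheory Set Real
open scoped NNReal ENNReal

namespace ChiAux

noncomputable def gcdf (t : ℝ) : ℝ := ((gaussianReal 0 1) (Set.Iic t)).toReal

lemma gcdf_eq_integral (t : ℝ) : gcdf t = ∫ x in Iic t, gaussianPDFReal 0 1 x := by
  rw [gcdf, gaussianReal_apply_eq_integral 0 one_ne_zero,
    ENNReal.toReal_ofReal (setIntegral_nonneg measurableSet_Iic
      (fun x _ => gaussianPDFReal_nonneg 0 1 x))]

lemma gcdf_nonneg (t : ℝ) : 0 ≤ gcdf t := ENNReal.toReal_nonneg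

lemma gcdf_le_one (t : ℝ) : gcdf t ≤ 1 := by
  rw [gcdf]
  have h : (gaussianReal 0 1) (Set.Iic t) ≤ 1 := prob_le_one
  exact le_trans (ENNReal.toReal_mono ENNReal.one_ne_top h) (by simp)

lemma gcdf_strictMono : StrictMono gcdf := by
  intro a b hab
  have hIoc : (gaussianReal 0 1) (Ioc a b) ≠ 0 := by
    rw [gaussianReal_apply 0 one_ne_zero]
    intro h
    have h2 : ∀ᵐ x ∂(volume.restrict (Ioc a b)), gaussianPDF 0 1 x = 0 :=
      (lintegral_eq_zero_iff (measurable_gaussianPDF 0 1)).1 h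
    have h3 := ae_iff.1 h2
    have huniv : {x : ℝ | ¬ gaussianPDF 0 1 x = 0} = univ :=
      eq_univ_of_forall fun x => (gaussianPDF_pos 0 one_ne_zero x).ne'
    rw [huniv, Measure.restrict_apply_univ] at h3
    simp [Real.volume_Ioc, hab, ENNReal.ofReal_eq_zero] at h3
    linarith
  have hsplit : (gaussianReal 0 1) (Iic b) = (gaussianReal 0 1) (Iic a) + (gaussianReal 0 1) (Ioc a b) := by
    rw [← measure_union (by exact Iic_disjoint_Ioc le_rfl) measurableSet_Ioc, Iic_union_Ioc_eq_Iic hab.le]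
  have hfin : (gaussianReal 0 1) (Ioc a b) ≠ ⊤ := measure_ne_top _ _
  rw [gcdf, gcdf, hsplit, ENNReal.toReal_add (measure_ne_top _ _) hfin]
  have : 0 < ((gaussianReal 0 1) (Ioc a b)).toReal :=
    ENNReal.toReal_pos hIoc hfin
  linarith

lemma gcdf_lt_one (t : ℝ) : gcdf t < 1 :=
  lt_of_lt_of_le (gcdf_strictMono (lt_add_one t)) (gcdf_le_one (t+1))

lemma gcdf_continuous : Continuous gcdf := by
  rw [continuous_iff_continuousAt]
  intro t₀
  have heq : ∀ t, gcdf t = ∫ x, (Iic t).indicator (gaussianPDFReal 0 1) x := by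
    intro t
    rw [gcdf_eq_integral, integral_indicator measurableSet_Iic]
  have hfun : gcdf = fun t => ∫ x, (Iic t).indicator (gaussianPDFReal 0 1) x := funext heq
  rw [hfun]
  apply continuousAt_of_dominated (bound := gaussianPDFReal 0 1)
  · exact Eventually.of_forall fun t =>
      ((measurable_gaussianPDFReal 0 1).indicator measurableSet_Iic).aestronglyMeasurable
  · exact Eventually.of_forall fun t => (Eventually.of_forall fun x => by
      by_cases hx : x ∈ Iic t
      · rw [indicator_of_mem hx, Real.norm_eq_abs, abs_of_nonneg (gaussianPDFReal_nonneg 0 1 x)]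
      · rw [indicator_of_notMem hx, norm_zero]
        exact gaussianPDFReal_nonneg 0 1 x)
  · exact integrable_gaussianPDFReal 0 1
  · filter_upwards [compl_mem_ae_iff.2 (volume_singleton (a := t₀))] with x hx
    rcases lt_or_gt_of_ne (fun h : x = t₀ => hx h) with h | h
    · apply Filter.EventuallyEq.continuousAt (y := gaussianPDFReal 0 1 x)
      filter_upwards [Ioi_mem_nhds h] with t ht
      exact indicator_of_mem (show x ∈ Iic t from mem_Iic.2 (le_of_lt ht)) _
    · apply Filter.EventuallyEq.continuousAt (y := (0:ℝ))
      filter_upwards [Iio_mem_nhds h] with t ht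
      exact indicator_of_notMem (by simp only [mem_Iic, not_le]; exact ht) _

lemma gcdf_tendsto_one : Tendsto gcdf atTop (𝓝 1) := by
  have h := tendsto_measure_Iic_atTop (gaussianReal 0 1)
  rw [measure_univ] at h
  have := (ENNReal.tendsto_toReal ENNReal.one_ne_top).comp h
  exact this

lemma gcdf_tendsto_zero : Tendsto gcdf atBot (𝓝 0) := by
  have h := tendsto_measure_Ici_atBot (gaussianReal 0 1)
  rw [measure_univ] at h
  have h2 : Tendsto (fun t : ℝ => 1 - ((gaussianReal 0 1) (Ici (t+1))).toReal) atBot (𝓝 0) := by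
    have := ((ENNReal.tendsto_toReal ENNReal.one_ne_top).comp
      (h.comp (tendsto_atBot_add_const_right atBot 1 tendsto_id))).const_sub 1
    simpa using this
  apply squeeze_zero (fun t => gcdf_nonneg t) _ h2
  intro t
  have hsub : Iic t ⊆ (Ici (t+1))ᶜ := by
    intro x hx
    simp only [mem_compl_iff, mem_Ici, not_le]
    exact lt_of_le_of_lt hx (lt_add_one t)
  have : (gaussianReal 0 1) (Iic t) ≤ (gaussianReal 0 1) (Ici (t+1))ᶜ := measure_mono hsub
  rw [prob_compl_eq_one_sub measurableSet_Ici] at this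
  calc gcdf t ≤ (1 - (gaussianReal 0 1) (Ici (t+1))).toReal := ENNReal.toReal_mono
        (by finiteness) this
    _ = 1 - ((gaussianReal 0 1) (Ici (t+1))).toReal := by
        rw [ENNReal.toReal_sub_of_le prob_le_one ENNReal.one_ne_top, ENNReal.toReal_one]

lemma gauss_tail_toReal (s : ℝ) : ((gaussianReal 0 1) (Ioi s)).toReal = 1 - gcdf s := by
  have : Ioi s = (Iic s)ᶜ := by ext x; simp
  rw [this, prob_compl_eq_one_sub measurableSet_Iic,
    ENNReal.toReal_sub_of_le prob_le_one ENNReal.one_ne_top, ENNReal.toReal_one, gcdf]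

lemma gauss_tail_le {s : ℝ} (hs : 2 ≤ s) : ((gaussianReal 0 1) (Ioi s)).toReal ≤ rexp (-s) := by
  have h1 : ((gaussianReal 0 1) (Ioi s)).toReal = ∫ x in Ioi s, gaussianPDFReal 0 1 x := by
    rw [gaussianReal_apply_eq_integral 0 one_ne_zero,
      ENNReal.toReal_ofReal (setIntegral_nonneg measurableSet_Ioi
        (fun x _ => gaussianPDFReal_nonneg 0 1 x))]
  rw [h1, ← integral_exp_neg_Ioi s]
  apply setIntegral_mono_on ((integrable_gaussianPDFReal 0 1).integrableOn)
    (by simpa using exp_neg_integrableOn_Ioi s one_pos) measurableSet_Ioi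
  intro x hx
  have hx2 : (2:ℝ) ≤ x := hs.trans (le_of_lt hx)
  rw [gaussianPDFReal]
  simp only [NNReal.coe_one, mul_one, sub_zero]
  have hcoef : (√(2 * π))⁻¹ ≤ 1 := by
    rw [inv_le_one_iff₀]
    right
    rw [show (1:ℝ) = √1 by simp]
    apply Real.sqrt_le_sqrt
    nlinarith [pi_gt_three]
  have hexp : rexp (-x^2 / 2) ≤ rexp (-x) := by
    apply Real.exp_le_exp.2
    nlinarith
  calc (√(2 * π))⁻¹ * rexp (-x^2 / 2)
      ≤ 1 * rexp (-x) :=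
        mul_le_mul hcoef hexp (le_of_lt (exp_pos _)) zero_le_one
    _ = rexp (-x) := one_mul _

end ChiAux

namespace ChiAux

lemma key {Ω : Type*} [MeasurableSpace Ω] (μ : MeasureTheory.Measure Ω) [IsProbabilityMeasure μ]
    (W₁ W₂ : Ω → ℝ) (F : ℝ → ℝ) (L : ℝ)
    (hF₁ : ∀ c, (μ {ω | W₁ ω ≤ c}).toReal = F c)
    (hF₂ : ∀ c, (μ {ω | W₂ ω ≤ c}).toReal = F c)
    (hmono : StrictMono F) (hcont : Continuous F) (htop : Tendsto F atTop (𝓝 1))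
    (hR : Tendsto (fun u => (μ {ω | u < W₁ ω ∧ u < W₂ ω}).toReal /
        (μ {ω | u < W₂ ω}).toReal) atTop (𝓝 L)) :
    Tendsto (fun q => (μ {ω | q < (μ {ω' | W₁ ω' ≤ W₁ ω}).toReal ∧
        q < (μ {ω' | W₂ ω' ≤ W₂ ω}).toReal}).toReal /
      (μ {ω | q < (μ {ω' | W₂ ω' ≤ W₂ ω}).toReal}).toReal) (𝓝[<] (1:ℝ)) (𝓝 L) := by
  have hle1 : ∀ c, F c ≤ 1 := by
    intro c
    rw [← hF₁ c]
    exact le_trans (ENNReal.toReal_mono ENNReal.one_ne_top prob_le_one) (by simp)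
  have hlt1 : ∀ c, F c < 1 := fun c => lt_of_lt_of_le (hmono (lt_add_one c)) (hle1 (c+1))
  -- existence of a value where F exceeds q
  have hsurj : ∀ q : ℝ, F 0 < q → q < 1 → ∃ u, F u = q := by
    intro q h0 h1
    obtain ⟨b, hb⟩ : ∃ b : ℝ, q < F b ∧ 0 ≤ b := by
      have := htop.eventually (eventually_gt_nhds h1)
      obtain ⟨b₀, hb₀⟩ := (this.and (eventually_ge_atTop 0)).exists
      exact ⟨b₀, hb₀⟩
    have := intermediate_value_Icc hb.2 hcont.continuousOn
      (show q ∈ Icc (F 0) (F b) from ⟨h0.le, hb.1.le⟩)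
    obtain ⟨u, _, hu⟩ := this
    exact ⟨u, hu⟩
  classical
  set u : ℝ → ℝ := fun q => if h : F 0 < q ∧ q < 1 then (hsurj q h.1 h.2).choose else 0 with hu_def
  have hu : ∀ q, F 0 < q → q < 1 → F (u q) = q := by
    intro q h0 h1
    simp only [hu_def, dif_pos (And.intro h0 h1)]
    exact (hsurj q h0 h1).choose_spec
  have hmemlt : ∀ c : ℝ, c < 1 → ∀ᶠ q in 𝓝[<] (1:ℝ), c < q ∧ q < 1 := by
    intro c hc
    have h1 : ∀ᶠ q in 𝓝[<] (1:ℝ), c < q :=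
      eventually_nhdsWithin_of_eventually_nhds (eventually_gt_nhds hc)
    have h2 : ∀ᶠ q in 𝓝[<] (1:ℝ), q < 1 := eventually_mem_nhdsWithin
    exact h1.and h2
  have htendsu : Tendsto u (𝓝[<] (1:ℝ)) atTop := by
    rw [tendsto_atTop]
    intro M
    filter_upwards [hmemlt (max (F 0) (F M)) (max_lt (hlt1 0) (hlt1 M))] with q hq
    have hFu : F (u q) = q := hu q (lt_of_le_of_lt (le_max_left _ _) hq.1) hq.2
    by_contra hM
    push_neg at hM
    have : F (u q) ≤ F M := hmono.monotone hM.le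
    rw [hFu] at this
    exact absurd (lt_of_le_of_lt (le_max_right (F 0) (F M)) hq.1) (not_lt.2 this)
  -- eventual equality of ratio functions
  have heq : ∀ᶠ q in 𝓝[<] (1:ℝ),
      (μ {ω | q < (μ {ω' | W₁ ω' ≤ W₁ ω}).toReal ∧
          q < (μ {ω' | W₂ ω' ≤ W₂ ω}).toReal}).toReal /
        (μ {ω | q < (μ {ω' | W₂ ω' ≤ W₂ ω}).toReal}).toReal =
      (μ {ω | u q < W₁ ω ∧ u q < W₂ ω}).toReal / (μ {ω | u q < W₂ ω}).toReal := by
    filter_upwards [hmemlt (F 0) (hlt1 0)] with q hq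
    have hFu : F (u q) = q := hu q hq.1 hq.2
    have hiff : ∀ (W : Ω → ℝ) ω, (q < F (W ω) ↔ u q < W ω) := by
      intro W ω
      constructor
      · intro h
        by_contra hle
        push_neg at hle
        have := hmono.monotone hle
        rw [hFu] at this
        exact absurd h (not_lt.2 this)
      · intro h
        rw [← hFu]
        exact hmono h
    have hset1 : {ω | q < (μ {ω' | W₁ ω' ≤ W₁ ω}).toReal ∧
        q < (μ {ω' | W₂ ω' ≤ W₂ ω}).toReal} = {ω | u q < W₁ ω ∧ u q < W₂ ω} := by
      ext ω
      simp only [mem_setOf_eq, hF₁, hF₂]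
      rw [hiff W₁ ω, hiff W₂ ω]
    have hset2 : {ω | q < (μ {ω' | W₂ ω' ≤ W₂ ω}).toReal} = {ω | u q < W₂ ω} := by
      ext ω
      simp only [mem_setOf_eq, hF₂]
      rw [hiff W₂ ω]
    rw [hset1, hset2]
  exact Tendsto.congr' (heq.mono fun q hq => hq.symm) (hR.comp htendsu)

end ChiAux

namespace ChiAux

section Tail

variable {T : ℝ → ℝ} {ρ : ℝ}

lemma tail_pos (hanti : Antitone T) (hnn : ∀ u, 0 ≤ T u)
    (hRV1 : Tendsto (fun u => T u / T u) atTop (𝓝 1)) : ∀ u, 0 < T u := by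
  intro u
  rcases (hnn u).lt_or_eq with h | h
  · exact h
  · exfalso
    have hev : ∀ᶠ v in atTop, T v / T v = 0 := by
      filter_upwards [eventually_ge_atTop u] with v hv
      have : T v = 0 := le_antisymm (h ▸ hanti hv) (hnn v)
      simp [this]
    have : Tendsto (fun v => T v / T v) atTop (𝓝 0) :=
      Tendsto.congr' (hev.mono fun v hv => hv.symm) tendsto_const_nhds
    have h01 : (0:ℝ) = 1 := tendsto_nhds_unique this hRV1
    norm_num at h01

lemma abs_event {c ε : ℝ} (hε : 0 < ε) : ∀ᶠ s in 𝓝 c, |s - c| < ε := by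
  have h : Metric.ball c ε ∈ 𝓝 c := Metric.ball_mem_nhds c hε
  filter_upwards [h] with s hs using by simpa [Real.dist_eq] using hs

lemma tail_long (hanti : Antitone T) (hpos : ∀ u, 0 < T u)
    (hRV' : ∀ t : ℝ, 0 < t → Tendsto (fun u => T (t*u) / T u) atTop (𝓝 (t ^ (-ρ))))
    {a : ℝ} (ha : 0 ≤ a) : Tendsto (fun u => T (u + a) / T u) atTop (𝓝 1) := by
  rw [Metric.tendsto_nhds]
  intro ε hε
  have hc : ContinuousAt (fun s : ℝ => s ^ (-ρ)) 1 :=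
    Real.continuousAt_rpow_const 1 (-ρ) (Or.inl one_ne_zero)
  have hc1 : Tendsto (fun δ : ℝ => ((1+δ) ^ (-ρ) : ℝ)) (𝓝[>] (0:ℝ)) (𝓝 1) := by
    have h1 : Tendsto (fun δ : ℝ => 1 + δ) (𝓝 (0:ℝ)) (𝓝 (1:ℝ)) := by
      have h2 : Continuous (fun δ : ℝ => 1 + δ) := continuous_const.add continuous_id
      simpa using h2.tendsto 0
    have h3 : Tendsto (fun δ : ℝ => 1 + δ) (𝓝[>] (0:ℝ)) (𝓝 (1:ℝ)) :=
      h1.mono_left (nhdsWithin_le_nhds : 𝓝[>] (0:ℝ) ≤ 𝓝 0)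
    have := hc.tendsto.comp h3
    simpa [Real.one_rpow, Function.comp_def] using this
  obtain ⟨δ, hδ1, hδ0⟩ := ((hc1.eventually (abs_event (by linarith : 0 < ε/2))).and
    self_mem_nhdsWithin).exists
  have hRVδ := (hRV' (1+δ) (by linarith)).eventually (abs_event (by linarith : 0 < ε/2))
  filter_upwards [hRVδ, eventually_ge_atTop (a/δ), eventually_gt_atTop 0] with u hu hua hu0
  have hTu := hpos u
  have h1 : u + a ≤ (1+δ)*u := by
    have : a ≤ δ * u := by
      rw [div_le_iff₀ hδ0] at hua
      linarith
    nlinarith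
  have h2 : T ((1+δ)*u) ≤ T (u + a) := hanti h1
  have h3 : T (u + a) ≤ T u := hanti (by linarith)
  have h4 : T ((1+δ)*u) / T u ≤ T (u+a) / T u := by gcongr
  have h5 : T (u+a) / T u ≤ 1 := by
    rw [div_le_one hTu]; exact h3
  rw [Real.dist_eq, abs_sub_lt_iff]
  refine ⟨by linarith, ?_⟩
  have hb1 := abs_sub_lt_iff.1 hu
  have hb2 := abs_sub_lt_iff.1 hδ1
  have : (1:ℝ) - ε < T ((1+δ)*u) / T u := by linarith [hb1.1, hb1.2, hb2.1, hb2.2]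
  linarith

lemma tail_poly_lb (hρ : 0 < ρ) (hanti : Antitone T) (hpos : ∀ u, 0 < T u)
    (hRV2 : Tendsto (fun u => T (2*u) / T u) atTop (𝓝 ((2:ℝ) ^ (-ρ)))) :
    ∃ c > 0, ∀ᶠ u in atTop, c * u ^ (-(ρ+1)) ≤ T u := by
  set β : ℝ := (2:ℝ) ^ (-(ρ+1)) with hβ
  have hβpos : 0 < β := Real.rpow_pos_of_pos two_pos _
  have hβlt : β < (2:ℝ) ^ (-ρ) := by
    rw [hβ, Real.rpow_lt_rpow_left_iff one_lt_two]
    linarith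
  have hev : ∀ᶠ u in atTop, β * T u ≤ T (2*u) := by
    filter_upwards [hRV2.eventually (eventually_gt_nhds hβlt)] with u hu
    have hTu := hpos u
    rw [lt_div_iff₀ hTu] at hu
    exact hu.le
  obtain ⟨x0', hx0'⟩ := eventually_atTop.1 hev
  set x0 : ℝ := max x0' 1 with hx0def
  have hx0ge : 1 ≤ x0 := le_max_right _ _
  have hx0pos : (0:ℝ) < x0 := lt_of_lt_of_le one_pos hx0ge
  have hstep : ∀ u, x0 ≤ u → β * T u ≤ T (2*u) := fun u hu =>
    hx0' u (le_trans (le_max_left _ _) hu)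
  have hind : ∀ k : ℕ, β ^ k * T x0 ≤ T (x0 * 2 ^ k) := by
    intro k
    induction k with
    | zero => simp
    | succ k ih =>
      have h1 : x0 ≤ x0 * 2 ^ k := by
        nlinarith [one_le_pow₀ (by norm_num : (1:ℝ) ≤ 2) (n := k), hx0pos]
      have h2 := hstep _ h1
      have h3 : x0 * 2 ^ (k+1) = 2 * (x0 * 2 ^ k) := by ring
      rw [h3]
      calc β ^ (k+1) * T x0 = β * (β ^ k * T x0) := by ring
        _ ≤ β * T (x0 * 2 ^ k) := by nlinarith
        _ ≤ T (2 * (x0 * 2 ^ k)) := h2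
  refine ⟨T x0 * (2/x0) ^ (-(ρ+1)), mul_pos (hpos x0) (Real.rpow_pos_of_pos (by positivity) _), ?_⟩
  filter_upwards [eventually_ge_atTop x0] with u hu
  have hupos : 0 < u := lt_of_lt_of_le hx0pos hu
  have hx : 1 ≤ u / x0 := (one_le_div hx0pos).2 hu
  obtain ⟨k, hk1, hk2⟩ := exists_nat_pow_near hx one_lt_two
  have hu2 : u ≤ x0 * 2 ^ (k+1) := by
    rw [div_lt_iff₀ hx0pos] at hk2
    linarith [hk2]
  have hT1 : T (x0 * 2 ^ (k+1)) ≤ T u := hanti hu2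
  have hT2 : β ^ (k+1) * T x0 ≤ T (x0 * 2 ^ (k+1)) := hind (k+1)
  -- now bound β ^ (k+1) from below
  have hbase : (2:ℝ) ^ (k+1) ≤ (2/x0) * u := by
    have : (2:ℝ) ^ k ≤ u / x0 := hk1
    have h2 : (2:ℝ) ^ (k+1) = 2 * 2 ^ k := by ring
    rw [h2]
    rw [div_mul_eq_mul_div, le_div_iff₀ hx0pos]
    rw [le_div_iff₀ hx0pos] at this
    linarith
  have hβk : β ^ (k+1) = ((2:ℝ) ^ (k+1) : ℝ) ^ (-(ρ+1)) := by
    rw [hβ, ← Real.rpow_natCast ((2:ℝ) ^ (-(ρ+1))) (k+1), ← Real.rpow_natCast (2:ℝ) (k+1),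
      ← Real.rpow_mul (by norm_num : (0:ℝ) ≤ 2), ← Real.rpow_mul (by norm_num : (0:ℝ) ≤ 2)]
    ring_nf
  have hpow2pos : (0:ℝ) < (2:ℝ) ^ (k+1) := by positivity
  have hmono : ((2/x0) * u : ℝ) ^ (-(ρ+1)) ≤ ((2:ℝ) ^ (k+1) : ℝ) ^ (-(ρ+1)) :=
    Real.rpow_le_rpow_of_nonpos hpow2pos hbase (by linarith)
  have hsplit : ((2/x0) * u : ℝ) ^ (-(ρ+1)) = (2/x0) ^ (-(ρ+1)) * u ^ (-(ρ+1)) :=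
    Real.mul_rpow (by positivity) hupos.le
  calc T x0 * (2/x0) ^ (-(ρ+1)) * u ^ (-(ρ+1))
      = T x0 * (((2/x0) * u : ℝ) ^ (-(ρ+1))) := by rw [hsplit]; ring
    _ ≤ T x0 * (((2:ℝ) ^ (k+1) : ℝ) ^ (-(ρ+1))) := by
        have := hpos x0
        nlinarith [hmono]
    _ = β ^ (k+1) * T x0 := by rw [hβk]; ring
    _ ≤ T (x0 * 2 ^ (k+1)) := hT2
    _ ≤ T u := hT1

end Tail

end ChiAux

namespace ChiAux

lemma tendsto_gauss_tail_div {ρ : ℝ} (hρ : 0 < ρ) {T : ℝ → ℝ} (hpos : ∀ u, 0 < T u)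
    (hlb : ∃ c > 0, ∀ᶠ u in atTop, c * u ^ (-(ρ+1)) ≤ T u) {δ : ℝ} (hδ : 0 < δ) :
    Tendsto (fun u => ((gaussianReal 0 1) (Ioi (δ*u))).toReal / T u) atTop (𝓝 0) := by
  obtain ⟨c, hc, hev⟩ := hlb
  have hg : Tendsto (fun u : ℝ => (1/c) * (u ^ (ρ+1) * rexp (-(δ*u)))) atTop (𝓝 0) := by
    have h0 := tendsto_rpow_mul_exp_neg_mul_atTop_nhds_zero (ρ+1) δ hδ
    have h1 : (fun x : ℝ => x ^ (ρ+1) * rexp (-δ*x)) = fun x : ℝ => x ^ (ρ+1) * rexp (-(δ*x)) := by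
      funext x; rw [neg_mul]
    rw [h1] at h0
    simpa using h0.const_mul (1/c)
  apply squeeze_zero' (Eventually.of_forall fun u => div_nonneg ENNReal.toReal_nonneg (hpos u).le)
    _ hg
  filter_upwards [hev, eventually_ge_atTop (2/δ), eventually_gt_atTop 0] with u h1 h2 h3
  have hδu : 2 ≤ δ * u := by
    rw [div_le_iff₀ hδ] at h2
    linarith
  have hG : ((gaussianReal 0 1) (Ioi (δ*u))).toReal ≤ rexp (-(δ*u)) := gauss_tail_le hδu
  have hTlb : 0 < c * u ^ (-(ρ+1)) := mul_pos hc (Real.rpow_pos_of_pos h3 _)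
  have hdiv : ((gaussianReal 0 1) (Ioi (δ*u))).toReal / T u ≤
      rexp (-(δ*u)) / (c * u ^ (-(ρ+1))) :=
    div_le_div₀ (exp_pos _).le hG hTlb h1
  refine hdiv.trans (le_of_eq ?_)
  rw [Real.rpow_neg h3.le]
  have hne : u ^ (ρ+1) ≠ 0 := (Real.rpow_pos_of_pos h3 _).ne'
  field_simp

noncomputable def Fconv (ν : MeasureTheory.Measure ℝ) (u : ℝ) : ℝ := ∫ y, gcdf (u - y) ∂ν

variable (ν : MeasureTheory.Measure ℝ) [IsProbabilityMeasure ν]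

lemma Fconv_integrable (u : ℝ) : Integrable (fun y => gcdf (u - y)) ν := by
  apply Integrable.mono' (integrable_const (1:ℝ))
  · exact (gcdf_continuous.comp (continuous_const.sub continuous_id)).aestronglyMeasurable
  · exact ae_of_all _ fun y => by
      rw [Real.norm_eq_abs, abs_of_nonneg (gcdf_nonneg _)]
      exact gcdf_le_one _

lemma Fconv_strictMono : StrictMono (Fconv ν) := by
  intro a b hab
  have hint := (Fconv_integrable ν b).sub (Fconv_integrable ν a)
  have hsub : Fconv ν b - Fconv ν a = ∫ y, (gcdf (b - y) - gcdf (a - y)) ∂ν := by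
    rw [integral_sub (Fconv_integrable ν b) (Fconv_integrable ν a)]
    rfl
  have hnn : (0:ℝ → ℝ) ≤ fun y => gcdf (b - y) - gcdf (a - y) := by
    intro y
    have := (gcdf_strictMono (show a - y < b - y by linarith)).le
    simpa using this
  have hpos : 0 < ∫ y, (gcdf (b - y) - gcdf (a - y)) ∂ν := by
    rw [integral_pos_iff_support_of_nonneg hnn hint]
    have hsupp : Function.support (fun y => gcdf (b - y) - gcdf (a - y)) = univ :=
      eq_univ_of_forall fun y =>
        (sub_pos.2 (gcdf_strictMono (show a - y < b - y by linarith))).ne'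
    rw [hsupp]
    simp
  have : 0 < Fconv ν b - Fconv ν a := hsub ▸ hpos
  linarith

lemma Fconv_continuous : Continuous (Fconv ν) := by
  apply continuous_of_dominated (bound := fun _ => (1:ℝ))
  · exact fun u => (gcdf_continuous.comp (continuous_const.sub continuous_id)).aestronglyMeasurable
  · exact fun u => ae_of_all _ fun y => by
      rw [Real.norm_eq_abs, abs_of_nonneg (gcdf_nonneg _)]
      exact gcdf_le_one _
  · exact integrable_const 1
  · exact ae_of_all _ fun y =>
      gcdf_continuous.comp (continuous_id.sub continuous_const)

lemma Fconv_tendsto_one : Tendsto (Fconv ν) atTop (𝓝 1) := by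
  have h1 : (1:ℝ) = ∫ _, (1:ℝ) ∂ν := by simp
  rw [h1]
  apply tendsto_integral_filter_of_dominated_convergence (bound := fun _ => (1:ℝ))
  · exact Eventually.of_forall fun u =>
      (gcdf_continuous.comp (continuous_const.sub continuous_id)).aestronglyMeasurable
  · exact Eventually.of_forall fun u => ae_of_all _ fun y => by
      rw [Real.norm_eq_abs, abs_of_nonneg (gcdf_nonneg _)]
      exact gcdf_le_one _
  · exact integrable_const 1
  · exact ae_of_all _ fun y => gcdf_tendsto_one.comp
      (tendsto_atTop_add_const_right atTop (-y) tendsto_id)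

lemma cdf_add_indep {Ω : Type*} [MeasurableSpace Ω] (μ : MeasureTheory.Measure Ω)
    [IsProbabilityMeasure μ] {Y e : Ω → ℝ} (hY : Measurable Y) (he : Measurable e)
    (hind : IndepFun Y e μ) (hge : μ.map e = gaussianReal 0 1) (u : ℝ) :
    (μ {ω | Y ω + e ω ≤ u}).toReal = Fconv (μ.map Y) u := by
  have hmap : μ.map (fun ω => (Y ω, e ω)) = (μ.map Y).prod (μ.map e) :=
    (indepFun_iff_map_prod_eq_prod_map_map hY.aemeasurable he.aemeasurable).1 hind
  have hms : MeasurableSet {p : ℝ × ℝ | p.1 + p.2 ≤ u} :=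
    measurableSet_le (measurable_fst.add measurable_snd) measurable_const
  have hset : {ω | Y ω + e ω ≤ u} = (fun ω => (Y ω, e ω)) ⁻¹' {p : ℝ × ℝ | p.1 + p.2 ≤ u} := rfl
  rw [hset, ← Measure.map_apply (hY.prodMk he) hms, hmap, hge, Measure.prod_apply hms]
  have hslice : ∀ y : ℝ, (Prod.mk y ⁻¹' {p : ℝ × ℝ | p.1 + p.2 ≤ u}) = Iic (u - y) := by
    intro y
    ext x
    simp only [mem_preimage, mem_setOf_eq, mem_Iic]
    constructor <;> intro <;> linarith
  have hmeas : Measurable fun y : ℝ => (gaussianReal 0 1) (Prod.mk y ⁻¹' {p : ℝ × ℝ | p.1 + p.2 ≤ u}) :=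
    measurable_measure_prodMk_left hms
  rw [← integral_toReal (by simpa [hslice] using hmeas.aemeasurable)
    (ae_of_all _ fun y => measure_lt_top _ _)]
  simp only [Fconv, gcdf]
  congr 1
  funext y
  rw [hslice y]

end ChiAux

namespace ChiAux

lemma div_div_div_same (a b c : ℝ) (hc : c ≠ 0) : (a/c)/(b/c) = a/b := by
  rcases eq_or_ne b 0 with hb | hb
  · simp [hb]
  · field_simp

lemma core {Ω : Type*} [MeasurableSpace Ω] (μ : MeasureTheory.Measure Ω)
    [IsProbabilityMeasure μ] {Y e1 e2 : Ω → ℝ} {ρ : ℝ} (hρ : 0 < ρ)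
    (hY : Measurable Y) (he1 : Measurable e1) (he2 : Measurable e2)
    (hind : iIndepFun ![Y, e1, e2] μ)
    (hg1 : μ.map e1 = gaussianReal 0 1) (hg2 : μ.map e2 = gaussianReal 0 1)
    (hRV' : ∀ t : ℝ, 0 < t → Tendsto (fun u =>
      (μ {ω | t*u < Y ω}).toReal / (μ {ω | u < Y ω}).toReal) atTop (𝓝 (t ^ (-ρ)))) :
    Tendsto (fun u => (μ {ω | u < Y ω + e1 ω ∧ u < Y ω + e2 ω}).toReal /
      (μ {ω | u < Y ω + e2 ω}).toReal) atTop (𝓝 1) := by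
  set T : ℝ → ℝ := fun u => (μ {ω | u < Y ω}).toReal with hT
  set G : ℝ → ℝ := fun s => ((gaussianReal 0 1) (Ioi s)).toReal with hG
  set Num : ℝ → ℝ := fun u => (μ {ω | u < Y ω + e1 ω ∧ u < Y ω + e2 ω}).toReal with hNum
  set Den : ℝ → ℝ := fun u => (μ {ω | u < Y ω + e2 ω}).toReal with hDen
  have hRVT : ∀ t : ℝ, 0 < t → Tendsto (fun u => T (t*u) / T u) atTop (𝓝 (t ^ (-ρ))) :=
    fun t ht => hRV' t ht
  have hanti : Antitone T := by
    intro u v huv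
    exact ENNReal.toReal_mono (measure_ne_top _ _)
      (measure_mono (fun ω h => lt_of_le_of_lt huv h))
  have hpos : ∀ u, 0 < T u := by
    apply tail_pos hanti (fun u => ENNReal.toReal_nonneg)
    have := hRVT 1 one_pos
    simpa [Real.one_rpow] using this
  have hplb : ∃ c > 0, ∀ᶠ u in atTop, c * u ^ (-(ρ+1)) ≤ T u :=
    tail_poly_lb hρ hanti hpos (hRVT 2 two_pos)
  have hGe1 : ∀ s, (μ {ω | s < e1 ω}).toReal = G s := by
    intro s
    rw [hG]
    congr 1
    rw [← hg1, Measure.map_apply he1 measurableSet_Ioi]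
    rfl
  have hGe2 : ∀ s, (μ {ω | s < e2 ω}).toReal = G s := by
    intro s
    rw [hG]
    congr 1
    rw [← hg2, Measure.map_apply he2 measurableSet_Ioi]
    rfl
  have hmeas3 : ∀ i, Measurable (![Y, e1, e2] i) := by
    intro i
    fin_cases i <;> simpa
  have h01 : IndepFun Y e1 μ := by
    have := hind.indepFun (show (0:Fin 3) ≠ 1 by decide)
    simpa using this
  have hpair : IndepFun (fun ω => (Y ω, e1 ω)) e2 μ := by
    have := hind.indepFun_prodMk hmeas3 0 1 2 (by decide) (by decide)
    simpa using this
  have htriple : ∀ s b : ℝ,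
      μ ({ω | s < Y ω} ∩ {ω | b < e1 ω} ∩ {ω | b < e2 ω}) =
        μ {ω | s < Y ω} * μ {ω | b < e1 ω} * μ {ω | b < e2 ω} := by
    intro s b
    have hset1 : {ω | s < Y ω} ∩ {ω | b < e1 ω} =
        (fun ω => (Y ω, e1 ω)) ⁻¹' (Ioi s ×ˢ Ioi b) := by
      ext ω
      simp [Set.mem_prod]
    have hset2 : {ω | b < e2 ω} = e2 ⁻¹' (Ioi b) := rfl
    have hset3 : {ω | s < Y ω} ∩ {ω | b < e1 ω} = Y ⁻¹' (Ioi s) ∩ e1 ⁻¹' (Ioi b) := rfl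
    rw [hset1, hset2,
      hpair.measure_inter_preimage_eq_mul _ _ (measurableSet_Ioi.prod measurableSet_Ioi)
        measurableSet_Ioi, ← hset1, hset3,
      h01.measure_inter_preimage_eq_mul _ _ measurableSet_Ioi measurableSet_Ioi]
    rfl
  have hNumLB : ∀ a u : ℝ, T (u+a) * (G (-a) * G (-a)) ≤ Num u := by
    intro a u
    have hsub : {ω | u+a < Y ω} ∩ {ω | -a < e1 ω} ∩ {ω | -a < e2 ω} ⊆
        {ω | u < Y ω + e1 ω ∧ u < Y ω + e2 ω} := by
      rintro ω ⟨⟨h1, h2⟩, h3⟩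
      simp only [mem_setOf_eq] at *
      constructor <;> linarith
    have := ENNReal.toReal_mono (measure_ne_top μ _) (measure_mono hsub)
    rw [htriple, ENNReal.toReal_mul, ENNReal.toReal_mul] at this
    calc T (u+a) * (G (-a) * G (-a))
        = (μ {ω | u+a < Y ω}).toReal * (μ {ω | -a < e1 ω}).toReal *
          (μ {ω | -a < e2 ω}).toReal := by rw [hGe1, hGe2]; ring
      _ ≤ Num u := this
  have hDenUB : ∀ δ u : ℝ, δ < 1 → Den u ≤ T ((1-δ)*u) + G (δ*u) := by
    intro δ u _
    have hsub : {ω | u < Y ω + e2 ω} ⊆ {ω | (1-δ)*u < Y ω} ∪ {ω | δ*u < e2 ω} := by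
      intro ω h
      simp only [mem_setOf_eq, mem_union] at *
      by_contra hcon
      push_neg at hcon
      linarith [hcon.1, hcon.2]
    have h1 := (measure_mono (μ := μ) hsub).trans (measure_union_le _ _)
    have h2 := ENNReal.toReal_mono
      (ENNReal.add_ne_top.2 ⟨measure_ne_top μ _, measure_ne_top μ _⟩) h1
    rw [ENNReal.toReal_add (measure_ne_top μ _) (measure_ne_top μ _)] at h2
    calc Den u ≤ (μ {ω | (1-δ)*u < Y ω}).toReal + (μ {ω | δ*u < e2 ω}).toReal := h2
      _ = T ((1-δ)*u) + G (δ*u) := by rw [hGe2]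
  have hNum_le_Den : ∀ u, Num u ≤ Den u :=
    fun u => ENNReal.toReal_mono (measure_ne_top _ _) (measure_mono (fun ω h => h.2))
  have hNum_nonneg : ∀ u, 0 ≤ Num u := fun u => ENNReal.toReal_nonneg
  -- a-limit : G(-a) → 1
  have hGlim : Tendsto (fun a : ℝ => G (-a)) atTop (𝓝 1) := by
    have h1 : Tendsto (fun a : ℝ => gcdf (-a)) atTop (𝓝 0) :=
      gcdf_tendsto_zero.comp tendsto_neg_atTop_atBot
    have h2 := h1.const_sub 1
    simp only [sub_zero] at h2
    refine h2.congr fun a => ?_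
    exact (gauss_tail_toReal (-a)).symm
  -- main ε argument
  rw [Metric.tendsto_nhds]
  intro ε hε
  set ε' : ℝ := min (ε/4) (1/4) with hε'def
  have hε'pos : 0 < ε' := lt_min (by linarith) (by norm_num)
  have hε'le : ε' ≤ ε/4 := min_le_left _ _
  have hε'lt : ε' ≤ 1/4 := min_le_right _ _
  -- choose δ
  have hc1 : Tendsto (fun δ : ℝ => ((1-δ) ^ (-ρ) : ℝ)) (𝓝[>] (0:ℝ)) (𝓝 1) := by
    have hc : ContinuousAt (fun s : ℝ => s ^ (-ρ)) 1 :=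
      Real.continuousAt_rpow_const 1 (-ρ) (Or.inl one_ne_zero)
    have h1 : Tendsto (fun δ : ℝ => 1 - δ) (𝓝 (0:ℝ)) (𝓝 (1:ℝ)) := by
      have h2 : Continuous (fun δ : ℝ => 1 - δ) := continuous_const.sub continuous_id
      simpa using h2.tendsto 0
    have h3 : Tendsto (fun δ : ℝ => 1 - δ) (𝓝[>] (0:ℝ)) (𝓝 (1:ℝ)) :=
      h1.mono_left (nhdsWithin_le_nhds : 𝓝[>] (0:ℝ) ≤ 𝓝 0)
    have := hc.tendsto.comp h3
    simpa [Real.one_rpow, Function.comp_def] using this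
  have hδev : ∀ᶠ δ in 𝓝[>] (0:ℝ), (|((1-δ) ^ (-ρ) : ℝ) - 1| < ε'/2 ∧ δ < 1) ∧ 0 < δ := by
    refine ((hc1.eventually (abs_event (by linarith : (0:ℝ) < ε'/2))).and ?_).and
      self_mem_nhdsWithin
    exact eventually_nhdsWithin_of_eventually_nhds (eventually_lt_nhds one_pos)
  obtain ⟨δ, ⟨⟨hδ1, hδlt1⟩, hδ0⟩⟩ := hδev.exists
  -- choose a
  have haev : ∀ᶠ a in (atTop : Filter ℝ), 1 - ε'/2 < G (-a) * G (-a) ∧ 0 < a := by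
    have h1 : Tendsto (fun a : ℝ => G (-a) * G (-a)) atTop (𝓝 1) := by
      have := hGlim.mul hGlim
      simpa using this
    exact (h1.eventually (eventually_gt_nhds (by linarith : 1 - ε'/2 < (1:ℝ)))).and
      (eventually_gt_atTop 0)
  obtain ⟨a, hGa, ha0⟩ := haev.exists
  -- eventual facts in u
  have E1 := (tail_long hanti hpos hRVT ha0.le).eventually (abs_event (by linarith : (0:ℝ) < ε'/2))
  have E2 := (hRVT (1-δ) (by linarith)).eventually (abs_event (by linarith : (0:ℝ) < ε'/4))
  have E3 := (tendsto_gauss_tail_div hρ hpos hplb hδ0).eventually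
    (abs_event (by linarith : (0:ℝ) < ε'/4))
  filter_upwards [E1, E2, E3] with u h1 h2 h3
  have hTu := hpos u
  -- bounds on x := Num u / T u and y := Den u / T u
  have hxlow : 1 - ε' < Num u / T u := by
    have hb := hNumLB a u
    have hdiv : (T (u+a) * (G (-a) * G (-a))) / T u ≤ Num u / T u := by gcongr
    have heq : (T (u+a) * (G (-a) * G (-a))) / T u = (T (u+a) / T u) * (G (-a) * G (-a)) := by
      ring
    rw [heq] at hdiv
    have h1' := abs_sub_lt_iff.1 h1
    have hGnn : 0 ≤ G (-a) * G (-a) := mul_nonneg ENNReal.toReal_nonneg ENNReal.toReal_nonneg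
    nlinarith [h1'.1, h1'.2]
  have hyup : Den u / T u < 1 + ε' := by
    have hb := hDenUB δ u hδlt1
    have hdiv : Den u / T u ≤ (T ((1-δ)*u) + G (δ*u)) / T u := by gcongr
    have heq : (T ((1-δ)*u) + G (δ*u)) / T u = T ((1-δ)*u) / T u + G (δ*u) / T u := by
      ring
    rw [heq] at hdiv
    have h2' := abs_sub_lt_iff.1 h2
    have h3' := abs_sub_lt_iff.1 h3
    have hδ1' := abs_sub_lt_iff.1 hδ1
    have : G (δ*u) / T u < ε'/4 := by
      have := h3'.1
      simpa using this
    linarith [h2'.1, h2'.2, hδ1'.1, hδ1'.2, this]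
  have hxy : Num u / T u ≤ Den u / T u := by gcongr; exact hNum_le_Den u
  have hypos : 0 < Den u / T u := lt_trans (by linarith) (lt_of_lt_of_le hxlow hxy)
  -- final ratio
  have hre : Num u / Den u = (Num u / T u) / (Den u / T u) :=
    (div_div_div_same (Num u) (Den u) (T u) hTu.ne').symm
  have hr1 : Num u / Den u ≤ 1 := by
    rw [hre, div_le_one hypos]
    exact hxy
  have hr2 : (1 - ε')/(1 + ε') ≤ Num u / Den u := by
    rw [hre]
    exact div_le_div₀ (div_nonneg (hNum_nonneg u) hTu.le) hxlow.le hypos hyup.le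
  have hr3 : 1 - 2*ε' ≤ (1 - ε')/(1 + ε') := by
    rw [le_div_iff₀ (by linarith)]
    nlinarith
  rw [Real.dist_eq, abs_sub_lt_iff]
  constructor
  · linarith
  · linarith

end ChiAux


open ChiAux

/-- The counterexample: `X₁ₙ = X/n + ε₁`, `X₂ₙ = X/n + ε₂` with `X`
regularly varying and `ε₁, ε₂` independent standard Gaussians converge (surely, hence
almost surely) to `(ε₁, ε₂)`, yet for each fixed `n ≥ 1` the tail dependence coefficient
is `1`, while for the limit `(ε₁, ε₂)` it is `0`. -/
theorem as_convergence_does_not_preserve_chi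
    {Ω : Type*} [MeasurableSpace Ω] (μ : Measure Ω) [IsProbabilityMeasure μ]
    (X e1 e2 : Ω → ℝ) (hX : Measurable X) (he1 : Measurable e1) (he2 : Measurable e2)
    (hXpos : ∀ ω, 0 ≤ X ω) (ρ : ℝ) (hρ : 0 < ρ)
    (hRV : ∀ t : ℝ, 0 < t →
      Tendsto (fun x => (μ {ω | t * x < X ω}).toReal / (μ {ω | x < X ω}).toReal)
        atTop (nhds (t ^ (-ρ))))
    (hg1 : μ.map e1 = gaussianReal 0 1)
    (hg2 : μ.map e2 = gaussianReal 0 1)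
    (hindep : iIndepFun ![X, e1, e2] μ) :
    (∀ ω, Tendsto (fun n : ℕ => (X ω / n + e1 ω, X ω / n + e2 ω)) atTop
        (nhds (e1 ω, e2 ω))) ∧
    (∀ n : ℕ, 1 ≤ n →
      Tendsto (fun q =>
          (μ {ω | q < (μ {ω' | X ω' / n + e1 ω' ≤ X ω / n + e1 ω}).toReal ∧
                  q < (μ {ω' | X ω' / n + e2 ω' ≤ X ω / n + e2 ω}).toReal}).toReal /
            (μ {ω | q < (μ {ω' | X ω' / n + e2 ω' ≤ X ω / n + e2 ω}).toReal}).toReal)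
        (nhdsWithin 1 (Set.Iio 1)) (nhds 1)) ∧
    Tendsto (fun q =>
        (μ {ω | q < (μ {ω' | e1 ω' ≤ e1 ω}).toReal ∧
                q < (μ {ω' | e2 ω' ≤ e2 ω}).toReal}).toReal /
          (μ {ω | q < (μ {ω' | e2 ω' ≤ e2 ω}).toReal}).toReal)
      (nhdsWithin 1 (Set.Iio 1)) (nhds 0) := by
  refine ⟨?_, ?_, ?_⟩
  · -- Part 1: a.s. (in fact sure) convergence
    intro ω
    have h0 : Tendsto (fun n : ℕ => X ω / n) atTop (𝓝 0) :=
      tendsto_const_div_atTop_nhds_zero_nat (X ω)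
    have h1 : Tendsto (fun n : ℕ => X ω / n + e1 ω) atTop (𝓝 (e1 ω)) := by
      simpa using h0.add_const (e1 ω)
    have h2 : Tendsto (fun n : ℕ => X ω / n + e2 ω) atTop (𝓝 (e2 ω)) := by
      simpa using h0.add_const (e2 ω)
    exact h1.prodMk_nhds h2
  · -- Part 2: chi = 1 for each fixed n
    intro n hn
    have hnpos : (0:ℝ) < (n:ℝ) := by
      exact_mod_cast lt_of_lt_of_le zero_lt_one hn
    set Y : Ω → ℝ := fun ω => X ω / (n:ℝ) with hYdef
    have hYm : Measurable Y := hX.div_const _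
    -- independence of (Y, e1, e2)
    have hiY : iIndepFun ![Y, e1, e2] μ := by
      have hcomp := hindep.comp (mγ := fun _ => inferInstance) ![(fun x : ℝ => x / (n:ℝ)), id, id] ?_
      · have heqf : (fun i => ![(fun x : ℝ => x / (n:ℝ)), id, id] i ∘ ![X, e1, e2] i) =
            ![Y, e1, e2] := by
          funext i
          fin_cases i <;> rfl
        rwa [heqf] at hcomp
      · intro i
        fin_cases i
        · exact measurable_id.div_const _
        · exact measurable_id
        · exact measurable_id
    -- regular variation of Y's tail
    have hRVY : ∀ t : ℝ, 0 < t → Tendsto (fun u =>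
        (μ {ω | t*u < Y ω}).toReal / (μ {ω | u < Y ω}).toReal) atTop (𝓝 (t ^ (-ρ))) := by
      intro t ht
      have hmul : Tendsto (fun u : ℝ => (n:ℝ) * u) atTop atTop :=
        tendsto_id.const_mul_atTop hnpos
      have hcomp := (hRV t ht).comp hmul
      refine hcomp.congr fun u => ?_
      have hset : ∀ s : ℝ, {ω | (n:ℝ) * s < X ω} = {ω | s < Y ω} := by
        intro s
        ext ω
        simp only [mem_setOf_eq, hYdef]
        rw [lt_div_iff₀ hnpos]
        constructor <;> intro h <;> linarith
      have harg : t * ((n:ℝ) * u) = (n:ℝ) * (t * u) := by ring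
      simp only [Function.comp]
      rw [harg, hset (t*u), hset u]
    -- analytic core
    have hRcore := core μ hρ hYm he1 he2 hiY hg1 hg2 hRVY
    -- distribution function of Y + e_i
    have hν : IsProbabilityMeasure (μ.map Y) := Measure.isProbabilityMeasure_map hYm.aemeasurable
    have hindY1 : IndepFun Y e1 μ := by
      have := hiY.indepFun (show (0:Fin 3) ≠ 1 by decide)
      simpa using this
    have hindY2 : IndepFun Y e2 μ := by
      have := hiY.indepFun (show (0:Fin 3) ≠ 2 by decide)
      simpa using this
    have hF1 : ∀ c, (μ {ω | Y ω + e1 ω ≤ c}).toReal = Fconv (μ.map Y) c :=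
      cdf_add_indep μ hYm he1 hindY1 hg1
    have hF2 : ∀ c, (μ {ω | Y ω + e2 ω ≤ c}).toReal = Fconv (μ.map Y) c :=
      cdf_add_indep μ hYm he2 hindY2 hg2
    exact key μ (fun ω => Y ω + e1 ω) (fun ω => Y ω + e2 ω) (Fconv (μ.map Y)) 1
      hF1 hF2 (Fconv_strictMono (μ.map Y)) (Fconv_continuous (μ.map Y))
      (Fconv_tendsto_one (μ.map Y)) hRcore
  · -- Part 3: chi = 0 for the Gaussian limit
    have hF1 : ∀ c, (μ {ω | e1 ω ≤ c}).toReal = gcdf c := by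
      intro c
      rw [gcdf, ← hg1, Measure.map_apply he1 measurableSet_Iic]
      rfl
    have hF2 : ∀ c, (μ {ω | e2 ω ≤ c}).toReal = gcdf c := by
      intro c
      rw [gcdf, ← hg2, Measure.map_apply he2 measurableSet_Iic]
      rfl
    have h12 : IndepFun e1 e2 μ := by
      have := hindep.indepFun (show (1:Fin 3) ≠ 2 by decide)
      simpa using this
    have hGe1 : ∀ u, (μ {ω | u < e1 ω}).toReal = 1 - gcdf u := by
      intro u
      rw [← gauss_tail_toReal, ← hg1, Measure.map_apply he1 measurableSet_Ioi]
      rfl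
    have hGe2 : ∀ u, (μ {ω | u < e2 ω}).toReal = 1 - gcdf u := by
      intro u
      rw [← gauss_tail_toReal, ← hg2, Measure.map_apply he2 measurableSet_Ioi]
      rfl
    have hR : Tendsto (fun u => (μ {ω | u < e1 ω ∧ u < e2 ω}).toReal /
        (μ {ω | u < e2 ω}).toReal) atTop (𝓝 0) := by
      have hlim : Tendsto (fun u : ℝ => 1 - gcdf u) atTop (𝓝 0) := by
        have := gcdf_tendsto_one.const_sub 1
        simpa using this
      refine hlim.congr fun u => ?_
      have hprod : μ {ω | u < e1 ω ∧ u < e2 ω} = μ {ω | u < e1 ω} * μ {ω | u < e2 ω} := by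
        have hset : {ω | u < e1 ω ∧ u < e2 ω} = e1 ⁻¹' (Ioi u) ∩ e2 ⁻¹' (Ioi u) := rfl
        rw [hset, h12.measure_inter_preimage_eq_mul _ _ measurableSet_Ioi measurableSet_Ioi]
        rfl
      have hne : (1:ℝ) - gcdf u ≠ 0 := by
        have := gcdf_lt_one u
        intro h
        -- 1 - gcdf u = 0 contradicts gcdf u < 1
        nlinarith [this]
      rw [hprod, ENNReal.toReal_mul, hGe1, hGe2, mul_div_assoc,
        div_self hne, mul_one]
    exact key μ e1 e2 gcdf 0 hF1 hF2 gcdf_strictMono gcdf_continuous gcdf_tendsto_one hR
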